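/- arXiv:1502.02221 — 2 statements merged into one kernel-verified Lean document; each statement's English description precedes it below -/
import Mathlib

section
/- Let $1 < p < 2$ and let $(u_n), u_0$ be in $L^2(\mathbb{R}^N)$ with $\sup_n \|u_n\|_{L^2} < \infty$. Let $\xi \in L^{2/(2-p)}(\mathbb{R}^N)$, $\xi \ge 0$, and $f : \mathbb{R} \to \mathbb{R}$ continuous with $|f(u)| \le \xi(x)|u|^{p-1}$ (pointwise in $x$ after composition). Assume $u_n \to u_0$ in $L^2(B_R)$ for every $R > 0$. Then $\int_{\mathbb{R}^N} |f(u_n) - f(u_0)|\,|u_n - u_0|\,dx \to 0$ as $n \to \infty$. -/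
open MeasureTheory Filter
open scoped ENNReal

lemma aux_add_rpow {x y : ℝ≥0∞} {s : ℝ} (hs : 0 ≤ s) :
    (x + y) ^ s ≤ 2 ^ s * (x ^ s + y ^ s) := by
  calc (x + y) ^ s ≤ (2 * (x ⊔ y)) ^ s := by
        apply ENNReal.rpow_le_rpow _ hs
        rcases le_total x y with h | h
        · calc x + y ≤ y + y := by gcongr
            _ = 2 * (x ⊔ y) := by rw [sup_eq_right.2 h]; ring
        · calc x + y ≤ x + x := by gcongr
            _ = 2 * (x ⊔ y) := by rw [sup_eq_left.2 h]; ring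
    _ = 2 ^ s * (x ⊔ y) ^ s := ENNReal.mul_rpow_of_nonneg _ _ hs
    _ ≤ 2 ^ s * (x ^ s + y ^ s) := by
        gcongr
        rcases le_total x y with h | h
        · rw [sup_eq_right.2 h]; exact le_add_self
        · rw [sup_eq_left.2 h]; exact le_self_add

lemma aux_holder3 {α : Type*} [MeasurableSpace α] (μ : Measure α)
    (F G H : α → ℝ≥0∞) (hF : AEMeasurable F μ) (hG : AEMeasurable G μ) (hH : AEMeasurable H μ)
    {a b : ℝ} (hab : Real.HolderConjugate a b) :
    ∫⁻ x, F x * G x * H x ∂μ ≤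
      (∫⁻ x, F x ^ (2*a) ∂μ) ^ (1/(2*a)) * (∫⁻ x, G x ^ (2*b) ∂μ) ^ (1/(2*b)) *
        (∫⁻ x, H x ^ (2:ℝ) ∂μ) ^ (1/(2:ℝ)) := by
  have h22 : Real.HolderConjugate 2 2 := Real.holderConjugate_iff.mpr ⟨by norm_num, by norm_num⟩
  have step1 := ENNReal.lintegral_mul_le_Lp_mul_Lq μ h22 (hF.mul hG) hH
  have hFG2 : AEMeasurable (fun x => F x ^ (2:ℝ)) μ := hF.pow_const _
  have hG2 : AEMeasurable (fun x => G x ^ (2:ℝ)) μ := hG.pow_const _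
  have step2 := ENNReal.lintegral_mul_le_Lp_mul_Lq μ hab hFG2 hG2
  calc ∫⁻ x, F x * G x * H x ∂μ
      ≤ (∫⁻ x, (F x * G x) ^ (2:ℝ) ∂μ) ^ (1/(2:ℝ)) * (∫⁻ x, H x ^ (2:ℝ) ∂μ) ^ (1/(2:ℝ)) :=
        step1
    _ ≤ ((∫⁻ x, F x ^ (2*a) ∂μ) ^ (1/a) * (∫⁻ x, G x ^ (2*b) ∂μ) ^ (1/b)) ^ (1/(2:ℝ)) *
          (∫⁻ x, H x ^ (2:ℝ) ∂μ) ^ (1/(2:ℝ)) := by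
        gcongr ?_ * _
        apply ENNReal.rpow_le_rpow _ (by norm_num)
        calc ∫⁻ x, (F x * G x) ^ (2:ℝ) ∂μ = ∫⁻ x, (F x ^ (2:ℝ)) * (G x ^ (2:ℝ)) ∂μ := by
              simp_rw [ENNReal.mul_rpow_of_nonneg _ _ (by norm_num : (0:ℝ) ≤ 2)]
          _ ≤ (∫⁻ x, (F x ^ (2:ℝ)) ^ a ∂μ) ^ (1/a) * (∫⁻ x, (G x ^ (2:ℝ)) ^ b ∂μ) ^ (1/b) :=
              step2
          _ = (∫⁻ x, F x ^ (2*a) ∂μ) ^ (1/a) * (∫⁻ x, G x ^ (2*b) ∂μ) ^ (1/b) := by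
              simp_rw [← ENNReal.rpow_mul]
    _ = (∫⁻ x, F x ^ (2*a) ∂μ) ^ (1/(2*a)) * (∫⁻ x, G x ^ (2*b) ∂μ) ^ (1/(2*b)) *
        (∫⁻ x, H x ^ (2:ℝ) ∂μ) ^ (1/(2:ℝ)) := by
        rw [ENNReal.mul_rpow_of_nonneg _ _ (by norm_num : (0:ℝ) ≤ 1/2), ← ENNReal.rpow_mul,
          ← ENNReal.rpow_mul]
        ring_nf

lemma aux_sq {α : Type*} [MeasurableSpace α] (μ : Measure α) (g : α → ℝ) :
    ∫⁻ x, (ENNReal.ofReal |g x|) ^ (2:ℝ) ∂μ = eLpNorm g 2 μ ^ (2:ℝ) := by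
  rw [eLpNorm_eq_lintegral_rpow_enorm_toReal two_ne_zero ENNReal.ofNat_ne_top, ← ENNReal.rpow_mul]
  simp_rw [← Real.enorm_eq_ofReal_abs]
  norm_num

/-- Key compactness estimate: under the sublinear growth `|f(u)| ≤ ξ(x)|u|^{p-1}` with
`ξ ∈ L^{2/(2-p)}`, a uniform `L²` bound and local strong `L²` convergence imply
`∫ |f(uₙ) - f(u₀)| |uₙ - u₀| → 0`. -/
theorem stmt9 {N : ℕ} (p : ℝ) (hp1 : 1 < p) (hp2 : p < 2)
    (ξ : (Fin N → ℝ) → ℝ) (hξ0 : ∀ x, 0 ≤ ξ x)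
    (hξ : MemLp ξ (ENNReal.ofReal (2/(2-p))) volume)
    (f : ℝ → ℝ) (hfc : Continuous f)
    (u : ℕ → (Fin N → ℝ) → ℝ) (u₀ : (Fin N → ℝ) → ℝ)
    (hun : ∀ n, MemLp (u n) 2 volume) (hu₀ : MemLp u₀ 2 volume)
    (hbdd : ∃ M : ℝ, ∀ n, (eLpNorm (u n) 2 volume).toReal ≤ M)
    (hfn : ∀ n x, |f (u n x)| ≤ ξ x * |u n x| ^ (p-1))
    (hf0 : ∀ x, |f (u₀ x)| ≤ ξ x * |u₀ x| ^ (p-1))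
    (hloc : ∀ R : ℝ, 0 < R →
      Tendsto (fun n => ∫ x in Metric.closedBall (0 : Fin N → ℝ) R, (u n x - u₀ x) ^ (2:ℕ))
        atTop (nhds 0)) :
    Tendsto (fun n => ∫ x, |f (u n x) - f (u₀ x)| * |u n x - u₀ x|) atTop (nhds 0) := by
  obtain ⟨M, hM⟩ := hbdd
  have h2p : 0 < 2 - p := by linarith
  have hp1' : 0 < p - 1 := by linarith
  set a : ℝ := 1/(2-p) with ha_def
  set b : ℝ := 1/(p-1) with hb_def
  have ha_pos : 0 < a := by positivity
  have hb_pos : 0 < b := by positivity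
  have hab : Real.HolderConjugate a b := by
    refine Real.holderConjugate_iff.mpr ⟨?_, ?_⟩
    · rw [ha_def, lt_div_iff₀ h2p]; linarith
    · rw [ha_def, hb_def, one_div, one_div, inv_inv, inv_inv]; ring
  -- ENNReal-valued functions
  set X : (Fin N → ℝ) → ℝ≥0∞ := fun x => ENNReal.ofReal (ξ x) with hX_def
  set G : ℕ → (Fin N → ℝ) → ℝ≥0∞ :=
    fun n x => ENNReal.ofReal (|u n x| ^ (p-1)) + ENNReal.ofReal (|u₀ x| ^ (p-1)) with hG_def
  set D : ℕ → (Fin N → ℝ) → ℝ≥0∞ := fun n x => ENNReal.ofReal |u n x - u₀ x| with hD_def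
  -- measurability
  have hXm : AEMeasurable X volume :=
    ENNReal.measurable_ofReal.comp_aemeasurable hξ.aestronglyMeasurable.aemeasurable
  have habs : ∀ v : (Fin N → ℝ) → ℝ, AEMeasurable v volume →
      AEMeasurable (fun x => ENNReal.ofReal (|v x| ^ (p-1))) volume := fun v hv =>
    ENNReal.measurable_ofReal.comp_aemeasurable
      ((continuous_abs.measurable.comp_aemeasurable hv).pow_const _)
  have hGm : ∀ n, AEMeasurable (G n) volume := fun n =>
    (habs _ (hun n).aestronglyMeasurable.aemeasurable).add
      (habs _ hu₀.aestronglyMeasurable.aemeasurable)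
  have hDm : ∀ n, AEMeasurable (D n) volume := fun n =>
    ENNReal.measurable_ofReal.comp_aemeasurable
      (continuous_abs.measurable.comp_aemeasurable
        ((hun n).aestronglyMeasurable.aemeasurable.sub hu₀.aestronglyMeasurable.aemeasurable))
  -- pointwise bound
  have hpoint : ∀ n x, ENNReal.ofReal (|f (u n x) - f (u₀ x)| * |u n x - u₀ x|)
      ≤ X x * G n x * D n x := by
    intro n x
    rw [ENNReal.ofReal_mul (abs_nonneg _)]
    refine mul_le_mul' ?_ le_rfl
    calc ENNReal.ofReal |f (u n x) - f (u₀ x)|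
        ≤ ENNReal.ofReal (ξ x * (|u n x| ^ (p-1) + |u₀ x| ^ (p-1))) := by
          apply ENNReal.ofReal_le_ofReal
          calc |f (u n x) - f (u₀ x)| ≤ |f (u n x)| + |f (u₀ x)| := abs_sub _ _
            _ ≤ ξ x * |u n x| ^ (p-1) + ξ x * |u₀ x| ^ (p-1) := add_le_add (hfn n x) (hf0 x)
            _ = ξ x * (|u n x| ^ (p-1) + |u₀ x| ^ (p-1)) := by ring
      _ = X x * G n x := by
          rw [ENNReal.ofReal_mul (hξ0 x),
            ENNReal.ofReal_add (Real.rpow_nonneg (abs_nonneg _) _)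
              (Real.rpow_nonneg (abs_nonneg _) _)]
  -- key rpow identities
  have hWpt : ∀ t : ℝ, (ENNReal.ofReal (|t| ^ (p-1))) ^ (2*b) = (ENNReal.ofReal |t|) ^ (2:ℝ) := by
    intro t
    rw [← ENNReal.ofReal_rpow_of_nonneg (abs_nonneg t) hp1'.le, ← ENNReal.rpow_mul]
    congr 1
    rw [hb_def]; field_simp
  have hDpt : ∀ t : ℝ, (ENNReal.ofReal |t|) ^ (2:ℝ) = ENNReal.ofReal (t ^ (2:ℕ)) := by
    intro t
    rw [ENNReal.ofReal_rpow_of_nonneg (abs_nonneg t) (by norm_num : (0:ℝ) ≤ 2)]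
    congr 1
    rw [show (2:ℝ) = ((2:ℕ):ℝ) by norm_num, Real.rpow_natCast, sq_abs]
  -- constants
  set Aq : ℝ≥0∞ := ∫⁻ x, X x ^ (2*a) with hAq_def
  have hAq_top : Aq ≠ ∞ := by
    have h2a : (2:ℝ)/(2-p) = 2*a := by rw [ha_def]; ring
    have hne0 : ENNReal.ofReal (2/(2-p)) ≠ 0 := by
      simp only [ne_eq, ENNReal.ofReal_eq_zero, not_le]; positivity
    have h1 := hξ.eLpNorm_lt_top
    rw [eLpNorm_eq_lintegral_rpow_enorm_toReal hne0 ENNReal.ofReal_ne_top] at h1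
    rw [ENNReal.toReal_ofReal (by positivity)] at h1
    have h2 : ∀ x, ‖ξ x‖ₑ = X x := fun x => by
      rw [Real.enorm_eq_ofReal_abs, abs_of_nonneg (hξ0 x)]
    simp_rw [h2, h2a] at h1
    have := (ENNReal.rpow_lt_top_iff_of_pos (by positivity : (0:ℝ) < 1/(2*a))).mp h1
    exact this.ne
  have hU2 : ∀ n, eLpNorm (u n) 2 volume ≤ ENNReal.ofReal M := fun n => by
    rw [← ENNReal.ofReal_toReal (hun n).eLpNorm_lt_top.ne]
    exact ENNReal.ofReal_le_ofReal (hM n)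
  set e₀ : ℝ≥0∞ := eLpNorm u₀ 2 volume with he₀_def
  have he₀ : e₀ ≠ ∞ := hu₀.eLpNorm_lt_top.ne
  set K : ℝ≥0∞ := 2 ^ (2*b) * ((ENNReal.ofReal M) ^ (2:ℝ) + e₀ ^ (2:ℝ)) with hK_def
  have hK_top : K ≠ ∞ := by
    apply ENNReal.mul_ne_top (ENNReal.rpow_ne_top_of_nonneg (by positivity) ENNReal.ofNat_ne_top)
    exact ENNReal.add_ne_top.2 ⟨ENNReal.rpow_ne_top_of_nonneg (by norm_num) ENNReal.ofReal_ne_top,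
      ENNReal.rpow_ne_top_of_nonneg (by norm_num) he₀⟩
  have hGr : ∀ n, ∫⁻ x, G n x ^ (2*b) ≤ K := by
    intro n
    calc ∫⁻ x, G n x ^ (2*b)
        ≤ ∫⁻ x, 2 ^ (2*b) * ((ENNReal.ofReal (|u n x| ^ (p-1))) ^ (2*b)
            + (ENNReal.ofReal (|u₀ x| ^ (p-1))) ^ (2*b)) :=
          lintegral_mono fun x => aux_add_rpow (by positivity)
      _ = 2 ^ (2*b) * (∫⁻ x, (ENNReal.ofReal |u n x|) ^ (2:ℝ)
            + (ENNReal.ofReal |u₀ x|) ^ (2:ℝ)) := by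
          simp_rw [hWpt]
          rw [lintegral_const_mul' _ _ (ENNReal.rpow_ne_top_of_nonneg (by positivity)
            ENNReal.ofNat_ne_top)]
      _ = 2 ^ (2*b) * ((∫⁻ x, (ENNReal.ofReal |u n x|) ^ (2:ℝ))
            + ∫⁻ x, (ENNReal.ofReal |u₀ x|) ^ (2:ℝ)) := by
          have hm1 : AEMeasurable (fun x => (ENNReal.ofReal |u n x|) ^ (2:ℝ)) volume :=
            (ENNReal.measurable_ofReal.comp_aemeasurable
              (continuous_abs.measurable.comp_aemeasurable
                (hun n).aestronglyMeasurable.aemeasurable)).pow_const _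
          rw [lintegral_add_left' hm1]
      _ = 2 ^ (2*b) * (eLpNorm (u n) 2 volume ^ (2:ℝ) + e₀ ^ (2:ℝ)) := by
          rw [aux_sq, aux_sq]
      _ ≤ K := by
          rw [hK_def]
          exact mul_le_mul_right
            (add_le_add (ENNReal.rpow_le_rpow (hU2 n) (by norm_num)) le_rfl) _
  set C₂ : ℝ≥0∞ := ENNReal.ofReal M + e₀ with hC₂_def
  have hC₂_top : C₂ ≠ ∞ := ENNReal.add_ne_top.2 ⟨ENNReal.ofReal_ne_top, he₀⟩
  have hD2 : ∀ n (s : Set (Fin N → ℝ)), ∫⁻ x in s, D n x ^ (2:ℝ) ≤ C₂ ^ (2:ℝ) := by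
    intro n s
    calc ∫⁻ x in s, D n x ^ (2:ℝ) ≤ ∫⁻ x, D n x ^ (2:ℝ) := setLIntegral_le_lintegral _ _
      _ = eLpNorm (fun x => u n x - u₀ x) 2 volume ^ (2:ℝ) := aux_sq _ _
      _ ≤ C₂ ^ (2:ℝ) := by
          apply ENNReal.rpow_le_rpow _ (by norm_num)
          calc eLpNorm (fun x => u n x - u₀ x) 2 volume
              ≤ eLpNorm (u n) 2 volume + e₀ :=
                eLpNorm_sub_le (hun n).aestronglyMeasurable hu₀.aestronglyMeasurable one_le_two
            _ ≤ C₂ := by rw [hC₂_def]; gcongr; exact hU2 n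
  set C₃ : ℝ≥0∞ := K ^ (1/(2*b)) with hC₃_def
  have hC₃_top : C₃ ≠ ∞ := ENNReal.rpow_ne_top_of_nonneg (by positivity) hK_top
  set Cin : ℝ≥0∞ := Aq ^ (1/(2*a)) * C₃ + 1 with hCin_def
  set Cout : ℝ≥0∞ := C₃ * C₂ + 1 with hCout_def
  have hCin_ne : Cin ≠ 0 := by
    have : (1:ℝ≥0∞) ≤ Cin := le_add_self
    exact (zero_lt_one.trans_le this).ne'
  have hCin_top : Cin ≠ ∞ := ENNReal.add_ne_top.2
    ⟨ENNReal.mul_ne_top (ENNReal.rpow_ne_top_of_nonneg (by positivity) hAq_top) hC₃_top,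
      ENNReal.one_ne_top⟩
  have hCout_ne : Cout ≠ 0 := by
    have : (1:ℝ≥0∞) ≤ Cout := le_add_self
    exact (zero_lt_one.trans_le this).ne'
  have hCout_top : Cout ≠ ∞ := ENNReal.add_ne_top.2
    ⟨ENNReal.mul_ne_top hC₃_top hC₂_top, ENNReal.one_ne_top⟩
  -- tail measure
  set ν : Measure (Fin N → ℝ) := volume.withDensity (fun x => X x ^ (2*a)) with hν_def
  have hν_apply : ∀ s : Set (Fin N → ℝ), MeasurableSet s → ν s = ∫⁻ x in s, X x ^ (2*a) :=
    fun s hs => withDensity_apply _ hs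
  have htail : Tendsto (fun k : ℕ => ν ((Metric.closedBall (0:Fin N → ℝ) ((k:ℝ)+1))ᶜ))
      atTop (nhds 0) := by
    have hmono : Antitone (fun k : ℕ => (Metric.closedBall (0:Fin N → ℝ) ((k:ℝ)+1))ᶜ) := by
      intro k m hkm
      apply Set.compl_subset_compl.2
      apply Metric.closedBall_subset_closedBall
      have : (k:ℝ) ≤ (m:ℝ) := by exact_mod_cast hkm
      linarith
    have h1 := tendsto_measure_iInter_atTop (μ := ν)
      (s := fun k : ℕ => (Metric.closedBall (0:Fin N → ℝ) ((k:ℝ)+1))ᶜ)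
      (fun k => (measurableSet_closedBall.compl).nullMeasurableSet) hmono
      ⟨0, by
        apply ne_top_of_le_ne_top _ (measure_mono (Set.subset_univ _))
        rw [hν_apply _ MeasurableSet.univ, Measure.restrict_univ]
        exact hAq_top⟩
    have h2 : (⋂ k : ℕ, (Metric.closedBall (0:Fin N → ℝ) ((k:ℝ)+1))ᶜ) = ∅ := by
      ext x
      simp only [Set.mem_iInter, Set.mem_compl_iff, Metric.mem_closedBall,
        Set.mem_empty_iff_false, iff_false, not_forall, not_not]
      obtain ⟨k, hk⟩ := exists_nat_ge (dist x 0)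
      exact ⟨k, hk.trans (by linarith)⟩
    rw [h2] at h1
    simpa [Function.comp_def] using h1
  -- local D identity
  have hDe : ∀ n (s : Set (Fin N → ℝ)),
      ∫⁻ x in s, D n x ^ (2:ℝ) = ENNReal.ofReal (∫ x in s, (u n x - u₀ x) ^ (2:ℕ)) := by
    intro n s
    have hint : Integrable (fun x => (u n x - u₀ x) ^ (2:ℕ)) (volume.restrict s) :=
      (((hun n).sub hu₀).integrable_sq).restrict
    rw [ofReal_integral_eq_lintegral_ofReal hint (Filter.Eventually.of_forall fun x => sq_nonneg _)]
    simp_rw [hD_def, hDpt]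
  -- main ENNReal convergence
  have key : Tendsto (fun n => ∫⁻ x, ENNReal.ofReal (|f (u n x) - f (u₀ x)| * |u n x - u₀ x|))
      atTop (nhds 0) := by
    rw [ENNReal.tendsto_nhds_zero]
    intro ε hε
    rcases eq_or_ne ε ∞ with rfl | hεtop
    · exact Filter.Eventually.of_forall fun n => le_top
    have hhalf : (0:ℝ≥0∞) < ε/2 := ENNReal.div_pos hε.ne' ENNReal.ofNat_ne_top
    have hhalf_top : ε/2 ≠ ∞ := ne_top_of_le_ne_top hεtop ENNReal.half_le_self
    -- tail radius
    set δ' : ℝ≥0∞ := (ε/2 / Cout) ^ (2*a) with hδ'_def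
    have hδ'_pos : 0 < δ' :=
      ENNReal.rpow_pos (ENNReal.div_pos hhalf.ne' hCout_top)
        ((ENNReal.div_lt_top hhalf_top hCout_ne).ne)
    obtain ⟨k₀, hk₀⟩ := (ENNReal.tendsto_nhds_zero.mp htail δ' hδ'_pos).exists
    set R : ℝ := (k₀:ℝ) + 1 with hR_def
    have hR_pos : (0:ℝ) < R := by positivity
    set s : Set (Fin N → ℝ) := Metric.closedBall (0:Fin N → ℝ) R with hs_def
    have hsR : MeasurableSet s := measurableSet_closedBall
    -- inside smallness
    set δ : ℝ≥0∞ := (ε/2 / Cin) ^ (2:ℝ) with hδ_def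
    have hδ_pos : 0 < δ :=
      ENNReal.rpow_pos (ENNReal.div_pos hhalf.ne' hCin_top)
        ((ENNReal.div_lt_top hhalf_top hCin_ne).ne)
    have hof : Tendsto (fun n => ENNReal.ofReal (∫ x in s, (u n x - u₀ x) ^ (2:ℕ)))
        atTop (nhds 0) := by
      have := (ENNReal.continuous_ofReal.tendsto 0).comp (hloc R hR_pos)
      simpa [Function.comp_def] using this
    have hev := ENNReal.tendsto_nhds_zero.mp hof δ hδ_pos
    filter_upwards [hev] with n hn
    have hDloc : ∫⁻ x in s, D n x ^ (2:ℝ) ≤ δ := by rw [hDe n s]; exact hn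
    have hin : ∫⁻ x in s, X x * G n x * D n x ≤ ε/2 := by
      calc ∫⁻ x in s, X x * G n x * D n x
          ≤ (∫⁻ x in s, X x ^ (2*a)) ^ (1/(2*a)) * (∫⁻ x in s, G n x ^ (2*b)) ^ (1/(2*b)) *
            (∫⁻ x in s, D n x ^ (2:ℝ)) ^ (1/(2:ℝ)) :=
            aux_holder3 _ _ _ _ hXm.restrict (hGm n).restrict (hDm n).restrict hab
        _ ≤ Aq ^ (1/(2*a)) * C₃ * δ ^ (1/(2:ℝ)) :=
            mul_le_mul' (mul_le_mul'
              (ENNReal.rpow_le_rpow (setLIntegral_le_lintegral _ _) (by positivity))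
              (ENNReal.rpow_le_rpow ((setLIntegral_le_lintegral _ _).trans (hGr n))
                (by positivity)))
              (ENNReal.rpow_le_rpow hDloc (by norm_num))
        _ ≤ Cin * δ ^ (1/(2:ℝ)) := mul_le_mul' le_self_add le_rfl
        _ = ε/2 := by
            rw [hδ_def, ← ENNReal.rpow_mul,
              show (2:ℝ)*(1/2) = 1 by norm_num, ENNReal.rpow_one]
            exact ENNReal.mul_div_cancel' (fun h => absurd h hCin_ne) (fun h => absurd h hCin_top)
    have hout : ∫⁻ x in sᶜ, X x * G n x * D n x ≤ ε/2 := by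
      calc ∫⁻ x in sᶜ, X x * G n x * D n x
          ≤ (∫⁻ x in sᶜ, X x ^ (2*a)) ^ (1/(2*a)) * (∫⁻ x in sᶜ, G n x ^ (2*b)) ^ (1/(2*b)) *
            (∫⁻ x in sᶜ, D n x ^ (2:ℝ)) ^ (1/(2:ℝ)) :=
            aux_holder3 _ _ _ _ hXm.restrict (hGm n).restrict (hDm n).restrict hab
        _ ≤ δ' ^ (1/(2*a)) * C₃ * C₂ := by
            refine mul_le_mul' (mul_le_mul' ?_ ?_) ?_
            · apply ENNReal.rpow_le_rpow _ (by positivity)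
              rw [← hν_apply _ hsR.compl]
              exact hk₀
            · exact ENNReal.rpow_le_rpow ((setLIntegral_le_lintegral _ _).trans (hGr n))
                (by positivity)
            · calc (∫⁻ x in sᶜ, D n x ^ (2:ℝ)) ^ (1/(2:ℝ)) ≤ (C₂ ^ (2:ℝ)) ^ (1/(2:ℝ)) :=
                  ENNReal.rpow_le_rpow (hD2 n _) (by norm_num)
                _ = C₂ := by
                    rw [← ENNReal.rpow_mul, show (2:ℝ)*(1/2) = 1 by norm_num,
                      ENNReal.rpow_one]
        _ = (ε/2 / Cout) * (C₃ * C₂) := by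
            rw [hδ'_def, ← ENNReal.rpow_mul, mul_one_div,
              div_self ((by positivity : (0:ℝ) < 2*a).ne'),
              ENNReal.rpow_one, mul_assoc]
        _ ≤ (ε/2 / Cout) * Cout := by gcongr; exact le_self_add
        _ = ε/2 := ENNReal.div_mul_cancel hCout_ne hCout_top
    calc ∫⁻ x, ENNReal.ofReal (|f (u n x) - f (u₀ x)| * |u n x - u₀ x|)
        ≤ ∫⁻ x, X x * G n x * D n x := lintegral_mono (hpoint n)
      _ = (∫⁻ x in s, X x * G n x * D n x) + ∫⁻ x in sᶜ, X x * G n x * D n x :=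
          (lintegral_add_compl _ hsR).symm
      _ ≤ ε/2 + ε/2 := add_le_add hin hout
      _ = ε := ENNReal.add_halves ε
  -- conclude
  have hhm : ∀ n, AEStronglyMeasurable
      (fun x => |f (u n x) - f (u₀ x)| * |u n x - u₀ x|) volume := by
    intro n
    have h1 : AEStronglyMeasurable (fun x => f (u n x) - f (u₀ x)) volume :=
      (hfc.comp_aestronglyMeasurable (hun n).aestronglyMeasurable).sub
        (hfc.comp_aestronglyMeasurable hu₀.aestronglyMeasurable)
    have h2 : AEStronglyMeasurable (fun x => u n x - u₀ x) volume :=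
      (hun n).aestronglyMeasurable.sub hu₀.aestronglyMeasurable
    simp_rw [← Real.norm_eq_abs]
    exact h1.norm.mul h2.norm
  have heq : ∀ n, ∫ x, |f (u n x) - f (u₀ x)| * |u n x - u₀ x| =
      (∫⁻ x, ENNReal.ofReal (|f (u n x) - f (u₀ x)| * |u n x - u₀ x|)).toReal := fun n =>
    integral_eq_lintegral_of_nonneg_ae
      (Filter.Eventually.of_forall fun x => by positivity) (hhm n)
  simp_rw [heq]
  have := (ENNReal.tendsto_toReal (a := 0) (by simp)).comp key
  simpa [Function.comp_def] using this
end

section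
/- Let $V : \mathbb{R}^N \to [0,\infty)$ be continuous with $V_b = \{V < b\}$ of finite measure for some $b > 0$, and for $\lambda > 0$ define on a Hilbert space $E$ (of functions $w$ with trace $w(\cdot,0) \in L^2 \cap L^{2^*_s}$) the norms $\|w\|_\lambda^2 = \|w\|_D^2 + \lambda \int V(x)|w(x,0)|^2 dx$, where $\|w\|_D^2$ is a Dirichlet-type seminorm satisfying a Sobolev inequality $S \|w(\cdot,0)\|_{L^{2^*_s}}^2 \le \|w\|_D^2$. Then there exist $\lambda_0 > 0$ and $c_0 > 0$, both independent of $\lambda$, such that $\|w\|_1 \le c_0 \|w\|_\lambda$ for all $w \in E$ and all $\lambda \ge \lambda_0$; one may take $\lambda_0 = \frac{S}{b(S + |V_b|^{(2^*_s-2)/2^*_s})}$ and $c_0^2 = 1 + \frac{|V_b|^{(2^*_s-2)/2^*_s}}{S}$. -/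
open MeasureTheory

/-- Uniform norm comparison (inequality (2.5)): with `‖w‖_λ² = ‖w‖_D² + λ∫V|tr w|²`,
a Sobolev inequality `S ‖tr w‖²_{2^*_s} ≤ ‖w‖_D²`, and `|V_b| < ∞`, one has
`‖w‖₁ ≤ c₀ ‖w‖_λ` for all `λ ≥ λ₀ = S/(b(S + |V_b|^{(2^*_s-2)/2^*_s}))`, with
`c₀² = 1 + |V_b|^{(2^*_s-2)/2^*_s}/S`. -/
theorem stmt14 {N : ℕ} {E : Type*} (s : ℝ) (hs0 : 0 < s) (hs1 : s < 1)
    (h2s : 2*s < (N:ℝ))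
    (V : (Fin N → ℝ) → ℝ) (hVc : Continuous V) (hV0 : ∀ x, 0 ≤ V x)
    (b : ℝ) (hb : 0 < b) (hVb : volume {x : Fin N → ℝ | V x < b} ≠ ⊤)
    (nD : E → ℝ) (hnD : ∀ w, 0 ≤ nD w)
    (tr : E → (Fin N → ℝ) → ℝ)
    (htrm : ∀ w, AEStronglyMeasurable (tr w) volume)
    (hVint : ∀ w, Integrable (fun x => V x * (tr w x) ^ (2:ℕ)) volume)
    (hLp : ∀ w, MemLp (tr w) (ENNReal.ofReal (2*(N:ℝ)/((N:ℝ)-2*s))) volume)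
    (S : ℝ) (hS : 0 < S)
    (hSob : ∀ w, S * ((eLpNorm (tr w) (ENNReal.ofReal (2*(N:ℝ)/((N:ℝ)-2*s)))
      volume).toReal) ^ (2:ℕ) ≤ nD w) :
    ∀ lam : ℝ,
      S / (b * (S + (volume {x : Fin N → ℝ | V x < b}).toReal ^
        ((2*(N:ℝ)/((N:ℝ)-2*s) - 2)/(2*(N:ℝ)/((N:ℝ)-2*s))))) ≤ lam →
      ∀ w : E,
        Real.sqrt (nD w + ∫ x, (tr w x) ^ (2:ℕ)) ≤
          Real.sqrt (1 + (volume {x : Fin N → ℝ | V x < b}).toReal ^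
              ((2*(N:ℝ)/((N:ℝ)-2*s) - 2)/(2*(N:ℝ)/((N:ℝ)-2*s))) / S) *
            Real.sqrt (nD w + lam * ∫ x, V x * (tr w x) ^ (2:ℕ)) := by
  intro lam hlam w
  set q : ℝ := 2*(N:ℝ)/((N:ℝ)-2*s) with hqdef
  have hNs : 0 < (N:ℝ) - 2*s := by linarith
  have hq2 : 2 < q := by
    rw [hqdef, lt_div_iff₀ hNs]; linarith
  have hq0 : 0 < q := by linarith
  set Vb : Set (Fin N → ℝ) := {x : Fin N → ℝ | V x < b} with hVbdef
  have hVbm : MeasurableSet Vb := (isOpen_lt hVc continuous_const).measurableSet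
  set m : ℝ := (volume Vb).toReal with hmdef
  have hm0 : 0 ≤ m := ENNReal.toReal_nonneg
  set M : ℝ := m ^ ((q - 2)/q) with hMdef
  have hM0 : 0 ≤ M := Real.rpow_nonneg hm0 _
  set T : ℝ := (eLpNorm (tr w) (ENNReal.ofReal q) volume).toReal with hTdef
  have hT0 : 0 ≤ T := ENNReal.toReal_nonneg
  set A : ℝ := nD w with hAdef
  have hA0 : 0 ≤ A := hnD w
  set J : ℝ := ∫ x, V x * (tr w x) ^ (2:ℕ) with hJdef
  have hJ0 : 0 ≤ J := integral_nonneg fun x => mul_nonneg (hV0 x) (by positivity)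
  set f : (Fin N → ℝ) → ℝ := fun x => (tr w x) ^ (2:ℕ) with hfdef
  have hfm : AEStronglyMeasurable f volume := by
    have := (htrm w).mul (htrm w)
    simpa [hfdef, sq, Pi.mul_def] using this
  -- finite measure instance on the restriction
  haveI : IsFiniteMeasure (volume.restrict Vb) :=
    ⟨by rwa [Measure.restrict_apply_univ, lt_top_iff_ne_top]⟩
  have hle2 : (2 : ENNReal) ≤ ENNReal.ofReal q := by
    have : (2 : ENNReal) = ENNReal.ofReal 2 := by norm_num
    rw [this]
    exact ENNReal.ofReal_le_ofReal hq2.le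
  -- tr w is in L² on Vb
  have hmr : MemLp (tr w) 2 (volume.restrict Vb) :=
    ((hLp w).restrict Vb).mono_exponent hle2
  -- integrability of f on Vb
  have hVbint : IntegrableOn f Vb volume := hmr.integrable_sq
  -- integrability of f on Vbᶜ
  have hcompl : IntegrableOn f Vbᶜ volume := by
    refine Integrable.mono' (((hVint w).const_mul b⁻¹).restrict (s := Vbᶜ))
      hfm.restrict ?_
    rw [ae_restrict_iff' hVbm.compl]
    refine ae_of_all _ fun x hx => ?_
    have hbV : b ≤ V x := not_lt.mp hx
    have hf0 : 0 ≤ f x := by positivity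
    rw [Real.norm_of_nonneg hf0]
    show tr w x ^ (2:ℕ) ≤ b⁻¹ * (V x * tr w x ^ (2:ℕ))
    have h1 : (1:ℝ) ≤ b⁻¹ * V x := by
      rw [← one_le_div hb] at hbV
      calc (1:ℝ) ≤ V x / b := hbV
        _ = b⁻¹ * V x := by ring
    nlinarith [sq_nonneg (tr w x)]
  have hint : Integrable f volume := by
    rw [← integrableOn_univ, ← Set.union_compl_self Vb]
    exact hVbint.union hcompl
  -- bound on the complement
  have hc1 : ∫ x in Vbᶜ, f x ≤ b⁻¹ * J := by
    have step1 : ∫ x in Vbᶜ, f x ≤ ∫ x in Vbᶜ, b⁻¹ * (V x * f x) := by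
      refine setIntegral_mono_on hcompl (((hVint w).const_mul b⁻¹).integrableOn)
        hVbm.compl fun x hx => ?_
      have hbV : b ≤ V x := not_lt.mp hx
      have hf0 : 0 ≤ f x := by positivity
      show tr w x ^ (2:ℕ) ≤ b⁻¹ * (V x * tr w x ^ (2:ℕ))
      have h1 : (1:ℝ) ≤ b⁻¹ * V x := by
        rw [← one_le_div hb] at hbV
        calc (1:ℝ) ≤ V x / b := hbV
          _ = b⁻¹ * V x := by ring
      nlinarith [sq_nonneg (tr w x)]
    have step2 : ∫ x in Vbᶜ, b⁻¹ * (V x * f x) = b⁻¹ * ∫ x in Vbᶜ, V x * f x :=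
      integral_const_mul _ _
    have step3 : ∫ x in Vbᶜ, V x * f x ≤ J :=
      setIntegral_le_integral (hVint w)
        (ae_of_all _ fun x => mul_nonneg (hV0 x) (by positivity))
    calc ∫ x in Vbᶜ, f x ≤ b⁻¹ * ∫ x in Vbᶜ, V x * f x := by rw [← step2]; exact step1
      _ ≤ b⁻¹ * J := by
          exact mul_le_mul_of_nonneg_left step3 (inv_nonneg.mpr hb.le)
  -- Hölder bound on Vb
  have hc2 : ∫ x in Vb, f x ≤ M * T ^ (2:ℕ) := by
    set e : ℝ := 1/(2:ℝ) - 1/q with hedef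
    have he0 : 0 ≤ e := by
      rw [hedef, sub_nonneg]
      apply div_le_div_of_nonneg_left one_pos.le (by norm_num) hq2.le
    have hT2 : eLpNorm (tr w) 2 (volume.restrict Vb) ≤
        eLpNorm (tr w) (ENNReal.ofReal q) volume * (volume Vb) ^ e := by
      calc eLpNorm (tr w) 2 (volume.restrict Vb)
          ≤ eLpNorm (tr w) (ENNReal.ofReal q) (volume.restrict Vb) *
            ((volume.restrict Vb) Set.univ) ^
              (1/(2:ENNReal).toReal - 1/(ENNReal.ofReal q).toReal) :=
            eLpNorm_le_eLpNorm_mul_rpow_measure_univ hle2 (htrm w).restrict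
        _ = eLpNorm (tr w) (ENNReal.ofReal q) (volume.restrict Vb) * (volume Vb) ^ e := by
            rw [Measure.restrict_apply_univ, hedef]
            norm_num [ENNReal.toReal_ofReal hq0.le]
        _ ≤ eLpNorm (tr w) (ENNReal.ofReal q) volume * (volume Vb) ^ e := by
            gcongr
            exact Measure.restrict_le_self
    -- value of the set integral
    have hval : ∫ x in Vb, f x = ((eLpNorm (tr w) 2 (volume.restrict Vb)).toReal) ^ (2:ℕ) := by
      have h20 : (2 : ENNReal) ≠ 0 := by norm_num
      have h2t : (2 : ENNReal) ≠ ⊤ := by norm_num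
      rw [hmr.eLpNorm_eq_integral_rpow_norm h20 h2t]
      have htr2 : (2:ENNReal).toReal = (2:ℝ) := by norm_num
      rw [htr2]
      have hXeq : (∫ a in Vb, ‖tr w a‖ ^ (2:ℝ)) = ∫ x in Vb, f x := by
        refine integral_congr_ae (ae_of_all _ fun x => ?_)
        show ‖tr w x‖ ^ (2:ℝ) = f x
        rw [show ((2:ℝ) = ((2:ℕ):ℝ)) by norm_num, Real.rpow_natCast]
        simp [hfdef, sq_abs]
      set X : ℝ := ∫ x in Vb, f x with hXdef
      have hX0 : 0 ≤ X := integral_nonneg fun x => by positivity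
      rw [hXeq, ENNReal.toReal_ofReal (Real.rpow_nonneg hX0 _)]
      rw [← Real.rpow_natCast (X ^ (2:ℝ)⁻¹) 2, ← Real.rpow_mul hX0]
      norm_num
    have hRne : eLpNorm (tr w) (ENNReal.ofReal q) volume * (volume Vb) ^ e ≠ ⊤ :=
      ENNReal.mul_ne_top (hLp w).2.ne (ENNReal.rpow_ne_top_of_nonneg he0 hVb)
    have hT2' : (eLpNorm (tr w) 2 (volume.restrict Vb)).toReal ≤ T * m ^ e := by
      have := ENNReal.toReal_mono hRne hT2
      rwa [ENNReal.toReal_mul, ← ENNReal.toReal_rpow] at this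
    have hsq : ((eLpNorm (tr w) 2 (volume.restrict Vb)).toReal) ^ (2:ℕ) ≤
        (T * m ^ e) ^ (2:ℕ) :=
      pow_le_pow_left₀ ENNReal.toReal_nonneg hT2' 2
    have hexp : (T * m ^ e) ^ (2:ℕ) = M * T ^ (2:ℕ) := by
      have : (m ^ e) ^ (2:ℕ) = M := by
        rw [← Real.rpow_natCast (m ^ e) 2, ← Real.rpow_mul hm0, hMdef]
        congr 1
        rw [hedef]
        field_simp
        ring
      rw [mul_pow, this]
      ring
    rw [hval]
    calc ((eLpNorm (tr w) 2 (volume.restrict Vb)).toReal) ^ (2:ℕ)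
        ≤ (T * m ^ e) ^ (2:ℕ) := hsq
      _ = M * T ^ (2:ℕ) := hexp
  -- combine: ∫ f ≤ M*A/S + b⁻¹*J
  have hT2A : T ^ (2:ℕ) ≤ A / S := by
    rw [le_div_iff₀ hS]
    have := hSob w
    rw [← hTdef, ← hAdef] at this
    linarith
  have hI : ∫ x, f x ≤ M * (A / S) + b⁻¹ * J := by
    have hsplit : (∫ x in Vb, f x) + ∫ x in Vbᶜ, f x = ∫ x, f x :=
      integral_add_compl hVbm hint
    have h2 : ∫ x in Vb, f x ≤ M * (A / S) :=
      hc2.trans (mul_le_mul_of_nonneg_left hT2A hM0)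
    linarith
  -- final algebra
  have hSM : 0 < S + M := by linarith
  have hlam0 : 0 < lam := lt_of_lt_of_le (by positivity) hlam
  have hkey : A + ∫ x, f x ≤ (1 + M / S) * (A + lam * J) := by
    have hc0 : (1 + M / S) * (S / (b * (S + M))) = 1 / b := by
      field_simp
    have h2 : b⁻¹ * J ≤ (1 + M / S) * lam * J := by
      have h3 : (1 + M / S) * (S / (b * (S + M))) ≤ (1 + M / S) * lam :=
        mul_le_mul_of_nonneg_left hlam (by positivity)
      rw [hc0] at h3
      calc b⁻¹ * J = (1 / b) * J := by rw [one_div]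
        _ ≤ ((1 + M / S) * lam) * J := mul_le_mul_of_nonneg_right h3 hJ0
        _ = (1 + M / S) * lam * J := rfl
    have expand : (1 + M / S) * (A + lam * J) = A + M / S * A + (1 + M / S) * lam * J := by
      ring
    have hMS : M * (A / S) = M / S * A := by ring
    rw [expand]
    linarith [hI, h2]
  have hc2pos : (0:ℝ) ≤ 1 + M / S := by positivity
  calc Real.sqrt (A + ∫ x, f x)
      ≤ Real.sqrt ((1 + M / S) * (A + lam * J)) := Real.sqrt_le_sqrt hkey
    _ = Real.sqrt (1 + M / S) * Real.sqrt (A + lam * J) := Real.sqrt_mul hc2pos _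
end
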